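/- arXiv:2303.17186 — 2 statements merged into one kernel-verified Lean document; each statement's English description precedes it below -/
import Mathlib

section
/- For every sufficiently small ε > 0 there exist N₀ and c > 0 such that for all integers N ≥ N₀ the following holds. Let (𝓛,𝒫) be an (N,ε)-extremal configuration and let C_1, …, C_{r²} be a partition of 𝒫 into cells, where r is an integer with N^{1/3−ε} ≤ r ≤ N^{1/3+ε}, such that every cell contains at most N^{1+ε}/r² points. Then there is a subset 𝓛′ ⊆ 𝓛 with |I(𝓛′,𝒫)| ≥ c·N^{4/3−ε} such that every line of 𝓛′ is incident to points lying in at least r^{1−20ε} distinct cells. -/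
open scoped Classical

noncomputable section

/-- The plane. -/
abbrev Point := ℝ × ℝ

/-- A line in the plane: a one-dimensional affine subspace of `ℝ²`. -/
def IsLine (l : Set Point) : Prop :=
  ∃ a b c : ℝ, (a, b) ≠ (0, 0) ∧ l = {p : Point | a * p.1 + b * p.2 = c}

/-- The number of incidences between a finite set of lines and a finite set of points. -/
def incCount (L : Finset (Set Point)) (P : Finset Point) : ℕ :=
  ((L ×ˢ P).filter fun x => x.2 ∈ x.1).card

/-- An `(N,ε)`-extremal configuration: `N^{1-ε} ≤ |𝓛|, |𝒫| ≤ N` and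
`|I(𝓛,𝒫)| ≥ N^{4/3-ε}`. -/
def ExtremalConfig (N : ℕ) (ε : ℝ) (L : Finset (Set Point)) (P : Finset Point) : Prop :=
  (∀ l ∈ L, IsLine l) ∧
  (N : ℝ) ^ ((1 : ℝ) - ε) ≤ L.card ∧ (L.card : ℝ) ≤ N ∧
  (N : ℝ) ^ ((1 : ℝ) - ε) ≤ P.card ∧ (P.card : ℝ) ≤ N ∧
  (N : ℝ) ^ ((4 : ℝ)/3 - ε) ≤ incCount L P

lemma line_param {a b c : ℝ} (hab : (a, b) ≠ ((0 : ℝ), (0 : ℝ))) {p q : Point}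
    (hp : a * p.1 + b * p.2 = c) (hq : a * q.1 + b * q.2 = c) (hpq : p ≠ q) :
    {z : Point | a * z.1 + b * z.2 = c} =
      {z : Point | ∃ t : ℝ, z = (p.1 + t * (q.1 - p.1), p.2 + t * (q.2 - p.2))} := by
  have hab' : a ≠ 0 ∨ b ≠ 0 := by
    by_contra h
    push_neg at h
    exact hab (by simp [h.1, h.2])
  have hu : ¬ (q.1 - p.1 = 0 ∧ q.2 - p.2 = 0) := by
    rintro ⟨h1, h2⟩
    exact hpq (Prod.ext (by linarith) (by linarith))
  ext z
  simp only [Set.mem_setOf_eq]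
  constructor
  · intro hz
    have h1 : a * (q.1 - p.1) + b * (q.2 - p.2) = 0 := by linear_combination hq - hp
    have h2 : a * (z.1 - p.1) + b * (z.2 - p.2) = 0 := by linear_combination hz - hp
    have hdet : (q.1 - p.1) * (z.2 - p.2) - (q.2 - p.2) * (z.1 - p.1) = 0 := by
      rcases hab' with ha | hb
      · have : a * ((q.1 - p.1) * (z.2 - p.2) - (q.2 - p.2) * (z.1 - p.1)) = 0 := by
          linear_combination (z.2 - p.2) * h1 - (q.2 - p.2) * h2
        rcases mul_eq_zero.1 this with h | h
        · exact absurd h ha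
        · exact h
      · have : b * ((q.1 - p.1) * (z.2 - p.2) - (q.2 - p.2) * (z.1 - p.1)) = 0 := by
          linear_combination (q.1 - p.1) * h2 - (z.1 - p.1) * h1
        rcases mul_eq_zero.1 this with h | h
        · exact absurd h hb
        · exact h
    by_cases hq1 : q.1 - p.1 = 0
    · have hq2 : q.2 - p.2 ≠ 0 := fun h => hu ⟨hq1, h⟩
      have hz1 : z.1 - p.1 = 0 := by
        have h3 : (q.2 - p.2) * (z.1 - p.1) = 0 := by linear_combination -hdet + (z.2-p.2) * hq1
        rcases mul_eq_zero.1 h3 with h | h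
        · exact absurd h hq2
        · exact h
      refine ⟨(z.2 - p.2) / (q.2 - p.2), Prod.ext ?_ ?_⟩
      · simp only; rw [hq1]; ring_nf; linarith
      · simp only; field_simp; ring
    · refine ⟨(z.1 - p.1) / (q.1 - p.1), Prod.ext ?_ ?_⟩
      · simp only; field_simp; ring
      · simp only
        have : (z.1 - p.1) / (q.1 - p.1) * (q.2 - p.2) = z.2 - p.2 := by
          rw [div_mul_eq_mul_div, div_eq_iff hq1]
          linear_combination -hdet
        linarith
  · rintro ⟨t, rfl⟩
    simp only
    have h1 : a * (q.1 - p.1) + b * (q.2 - p.2) = 0 := by linear_combination hq - hp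
    linear_combination hp + t * h1

lemma line_unique {l₁ l₂ : Set Point} (h₁ : IsLine l₁) (h₂ : IsLine l₂) {p q : Point}
    (hpq : p ≠ q) (hp₁ : p ∈ l₁) (hq₁ : q ∈ l₁) (hp₂ : p ∈ l₂) (hq₂ : q ∈ l₂) : l₁ = l₂ := by
  obtain ⟨a, b, c, hab, rfl⟩ := h₁
  obtain ⟨a', b', c', hab', rfl⟩ := h₂
  rw [line_param hab hp₁ hq₁ hpq, line_param hab' hp₂ hq₂ hpq]

lemma incCount_eq_sum (L : Finset (Set Point)) (P : Finset Point) :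
    incCount L P = ∑ l ∈ L, (P.filter (· ∈ l)).card := by
  unfold incCount
  rw [Finset.card_filter, Finset.sum_product]
  exact Finset.sum_congr rfl fun l _ => (Finset.card_filter _ _).symm

lemma sum_sq_le (L : Finset (Set Point)) (P : Finset Point) (hL : ∀ l ∈ L, IsLine l) :
    ∑ l ∈ L, ((P.filter (· ∈ l)).card) ^ 2 ≤ incCount L P + P.card ^ 2 := by
  have key : ∀ p q : Point, p ≠ q → (L.filter fun l => p ∈ l ∧ q ∈ l).card ≤ 1 := by
    intro p q hpq
    refine Finset.card_le_one.2 fun l hl l' hl' => ?_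
    simp only [Finset.mem_filter] at hl hl'
    exact line_unique (hL _ hl.1) (hL _ hl'.1) hpq hl.2.1 hl.2.2 hl'.2.1 hl'.2.2
  have hmul : ∀ (c d : Prop) [Decidable c] [Decidable d],
      (if c then (1:ℕ) else 0) * (if d then 1 else 0) = if c ∧ d then 1 else 0 := by
    intro c d _ _
    by_cases h1 : c <;> by_cases h2 : d <;> simp [h1, h2]
  have expand : ∀ l ∈ L, ((P.filter (· ∈ l)).card) ^ 2
      = ∑ p ∈ P, ∑ q ∈ P, ((if p ∈ l then (1:ℕ) else 0) * (if q ∈ l then 1 else 0)) := by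
    intro l _
    rw [Finset.card_filter, pow_two, Finset.sum_mul_sum]
  rw [Finset.sum_congr rfl expand, Finset.sum_comm]
  have step1 : ∀ p ∈ P,
      (∑ l ∈ L, ∑ q ∈ P, ((if p ∈ l then (1:ℕ) else 0) * (if q ∈ l then 1 else 0)))
      ≤ (∑ l ∈ L, if p ∈ l then 1 else 0) + (P.card - 1) := by
    intro p hp
    rw [Finset.sum_comm]
    rw [← Finset.add_sum_erase _ _ hp]
    apply add_le_add
    · apply le_of_eq
      apply Finset.sum_congr rfl
      intro l _
      by_cases h : p ∈ l <;> simp [h]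
    · calc ∑ q ∈ P.erase p, ∑ l ∈ L, ((if p ∈ l then (1:ℕ) else 0) * (if q ∈ l then 1 else 0))
          ≤ ∑ q ∈ P.erase p, 1 := by
            apply Finset.sum_le_sum
            intro q hq
            have hqp : p ≠ q := fun h => (Finset.mem_erase.1 hq).1 h.symm
            calc ∑ l ∈ L, ((if p ∈ l then (1:ℕ) else 0) * (if q ∈ l then 1 else 0))
                = (L.filter fun l => p ∈ l ∧ q ∈ l).card := by
                  rw [Finset.card_filter]
                  exact Finset.sum_congr rfl fun l _ => hmul _ _
              _ ≤ 1 := key p q hqp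
        _ = (P.erase p).card := by simp
        _ ≤ P.card - 1 := by rw [Finset.card_erase_of_mem hp]
  calc ∑ p ∈ P, ∑ l ∈ L, ∑ q ∈ P, ((if p ∈ l then (1:ℕ) else 0) * (if q ∈ l then 1 else 0))
      ≤ ∑ p ∈ P, ((∑ l ∈ L, if p ∈ l then 1 else 0) + (P.card - 1)) := Finset.sum_le_sum step1
    _ = (∑ p ∈ P, ∑ l ∈ L, if p ∈ l then 1 else 0) + P.card * (P.card - 1) := by
        rw [Finset.sum_add_distrib, Finset.sum_const, smul_eq_mul]
    _ ≤ incCount L P + P.card ^ 2 := by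
        have : (∑ p ∈ P, ∑ l ∈ L, if p ∈ l then (1:ℕ) else 0) = incCount L P := by
          rw [incCount_eq_sum, Finset.sum_comm]
          exact Finset.sum_congr rfl fun l _ => (Finset.card_filter _ _).symm
        rw [this]
        have : P.card * (P.card - 1) ≤ P.card ^ 2 := by
          cases' Nat.eq_zero_or_pos P.card with h h
          · simp [h]
          · nlinarith [Nat.sub_le P.card 1]
        omega
  
lemma inc_bound (L : Finset (Set Point)) (P : Finset Point) (hL : ∀ l ∈ L, IsLine l) :
    (incCount L P : ℝ) ≤ L.card + P.card * Real.sqrt L.card := by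
  set I : ℝ := (incCount L P : ℝ) with hI
  set m : ℝ := (L.card : ℝ)
  set p : ℝ := (P.card : ℝ)
  have hm : 0 ≤ m := Nat.cast_nonneg _
  have hp : 0 ≤ p := Nat.cast_nonneg _
  have hI0 : 0 ≤ I := Nat.cast_nonneg _
  have hsq : I ^ 2 ≤ m * (I + p ^ 2) := by
    have cs : I ^ 2 ≤ m * ∑ l ∈ L, (((P.filter (· ∈ l)).card : ℝ)) ^ 2 := by
      have := sq_sum_le_card_mul_sum_sq (s := L)
        (f := fun l => (((P.filter (· ∈ l)).card : ℝ)))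
      calc I ^ 2 = (∑ l ∈ L, (((P.filter (· ∈ l)).card : ℝ))) ^ 2 := by
            rw [hI, incCount_eq_sum]; push_cast; ring
        _ ≤ m * ∑ l ∈ L, (((P.filter (· ∈ l)).card : ℝ)) ^ 2 := this
    refine cs.trans ?_
    have h2 : (∑ l ∈ L, (((P.filter (· ∈ l)).card : ℝ)) ^ 2) ≤ I + p ^ 2 := by
      have := sum_sq_le L P hL
      calc (∑ l ∈ L, (((P.filter (· ∈ l)).card : ℝ)) ^ 2)
          = ((∑ l ∈ L, ((P.filter (· ∈ l)).card) ^ 2 : ℕ) : ℝ) := by push_cast; ring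
        _ ≤ ((incCount L P + P.card ^ 2 : ℕ) : ℝ) := by exact_mod_cast this
        _ = I + p ^ 2 := by push_cast; ring
    exact mul_le_mul_of_nonneg_left h2 hm
  by_contra hcon
  push_neg at hcon
  have hs : Real.sqrt m * Real.sqrt m = m := Real.mul_self_sqrt hm
  have hs0 : 0 ≤ p * Real.sqrt m := mul_nonneg hp (Real.sqrt_nonneg _)
  have hIpos : 0 < I := lt_of_le_of_lt (by positivity) hcon
  have h1 : I * I > (m + p * Real.sqrt m) * I := by
    exact mul_lt_mul_of_pos_right hcon hIpos
  have h2 : (m + p * Real.sqrt m) * I ≥ m * I + (p * Real.sqrt m) * (p * Real.sqrt m) := by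
    have : (p * Real.sqrt m) * I ≥ (p * Real.sqrt m) * (p * Real.sqrt m) := by
      apply mul_le_mul_of_nonneg_left _ hs0
      exact le_trans (le_add_of_nonneg_left hm) hcon.le
    nlinarith
  have h3 : (p * Real.sqrt m) * (p * Real.sqrt m) = m * p ^ 2 := by
    calc (p * Real.sqrt m) * (p * Real.sqrt m) = p * p * (Real.sqrt m * Real.sqrt m) := by ring
      _ = m * p ^ 2 := by rw [hs]; ring
  nlinarith [hsq]

set_option maxHeartbeats 1000000 in
/-- in a point-weighted cell decomposition of an extremal configuration,
one can refine the line set so that each remaining line meets many cells. -/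
theorem refine_lines_meet_many_cells :
    ∃ ε₀ : ℝ, 0 < ε₀ ∧ ∀ ε : ℝ, 0 < ε → ε ≤ ε₀ →
      ∃ (N₀ : ℕ) (c : ℝ), 0 < c ∧ ∀ N : ℕ, N₀ ≤ N →
        ∀ (L : Finset (Set Point)) (P : Finset Point) (r : ℕ)
          (cells : Fin (r ^ 2) → Finset Point),
          ExtremalConfig N ε L P →
          (N : ℝ) ^ ((1 : ℝ)/3 - ε) ≤ r → (r : ℝ) ≤ (N : ℝ) ^ ((1 : ℝ)/3 + ε) →
          (∀ i j, i ≠ j → Disjoint (cells i) (cells j)) →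
          P = Finset.univ.biUnion cells →
          (∀ i, ((cells i).card : ℝ) ≤ (N : ℝ) ^ ((1 : ℝ) + ε) / (r : ℝ) ^ 2) →
          ∃ L' ⊆ L,
            c * (N : ℝ) ^ ((4 : ℝ)/3 - ε) ≤ incCount L' P ∧
            ∀ l ∈ L',
              (r : ℝ) ^ ((1 : ℝ) - 20 * ε) ≤
                ((Finset.univ.filter fun i => ∃ p ∈ cells i, p ∈ l).card : ℝ) := by
  refine ⟨1/30, by norm_num, fun ε hε hε30 => ?_⟩
  refine ⟨⌈(4 : ℝ) ^ (1/ε)⌉₊ + 2, 1/2, by norm_num, ?_⟩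
  intro N hN L P r cells hcfg hr1 hr2 hdisj hPart hcell
  obtain ⟨hlines, hL1, hL2, hP1, hP2, hInc⟩ := hcfg
  set n : ℝ := (N : ℝ) with hn_def
  have hn2 : (2 : ℝ) ≤ n := by
    have h : 2 ≤ N := le_trans (by omega) hN
    rw [hn_def]
    exact_mod_cast h
  have hn0 : (0 : ℝ) < n := by linarith
  have hn1 : (1 : ℝ) ≤ n := by linarith
  -- n ^ ε ≥ 4
  have hn4 : (4 : ℝ) ≤ n ^ ε := by
    have h1 : (4 : ℝ) ^ (1/ε) ≤ n := by
      have h2 : ⌈(4 : ℝ) ^ (1/ε)⌉₊ ≤ N := by omega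
      calc (4 : ℝ) ^ (1/ε) ≤ (⌈(4 : ℝ) ^ (1/ε)⌉₊ : ℝ) := Nat.le_ceil _
        _ ≤ n := by rw [hn_def]; exact_mod_cast h2
    calc (4 : ℝ) = (4 : ℝ) ^ ((1/ε) * ε) := by
          rw [one_div_mul_cancel (ne_of_gt hε), Real.rpow_one]
      _ = ((4 : ℝ) ^ (1/ε)) ^ ε := Real.rpow_mul (by norm_num) _ _
      _ ≤ n ^ ε := Real.rpow_le_rpow (by positivity) h1 hε.le
  set R : ℝ := (r : ℝ) with hR_def
  have hR0 : (0 : ℝ) < R := lt_of_lt_of_le (Real.rpow_pos_of_pos hn0 _) hr1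
  -- the good/bad split
  set good : Set Point → Prop := fun l =>
    (r : ℝ) ^ ((1 : ℝ) - 20 * ε) ≤
      ((Finset.univ.filter fun i => ∃ p ∈ cells i, p ∈ l).card : ℝ) with hgood_def
  refine ⟨L.filter good, Finset.filter_subset _ _, ?_, ?_⟩
  swap
  · intro l hl
    exact (Finset.mem_filter.1 hl).2
  set Bad : Finset (Set Point) := L.filter fun l => ¬ good l with hBad_def
  -- splitting incidences
  have hsplit : incCount L P = incCount (L.filter good) P + incCount Bad P := by
    rw [incCount_eq_sum, incCount_eq_sum, incCount_eq_sum]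
    exact (Finset.sum_filter_add_sum_filter_not L good _).symm
  -- decomposition of point-filters over cells
  have hcardsplit : ∀ q : Point → Prop,
      (P.filter q).card = ∑ i, ((cells i).filter q).card := by
    intro q
    rw [hPart, Finset.filter_biUnion]
    exact Finset.card_biUnion fun i _ j _ hij =>
      Finset.disjoint_filter_filter (hdisj i j hij)
  have hPcard : P.card = ∑ i, (cells i).card := by
    rw [hPart]
    exact Finset.card_biUnion fun i _ j _ hij => hdisj i j hij
  -- incCount Bad P = ∑ i incCount Bad (cells i)
  have hBadDecomp : incCount Bad P = ∑ i, incCount Bad (cells i) := by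
    rw [incCount_eq_sum]
    have : ∀ l ∈ Bad, (P.filter (· ∈ l)).card = ∑ i, ((cells i).filter (· ∈ l)).card :=
      fun l _ => hcardsplit _
    rw [Finset.sum_congr rfl this, Finset.sum_comm]
    exact Finset.sum_congr rfl fun i _ => (incCount_eq_sum _ _).symm
  set B : Fin (r ^ 2) → Finset (Set Point) :=
    fun i => Bad.filter fun l => ∃ p ∈ cells i, p ∈ l with hB_def
  have hBi : ∀ i, incCount Bad (cells i) = incCount (B i) (cells i) := by
    intro i
    rw [incCount_eq_sum, incCount_eq_sum]
    refine (Finset.sum_filter_of_ne ?_).symm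
    intro l _ hne
    obtain ⟨p, hp⟩ := Finset.card_pos.1 (Nat.pos_of_ne_zero hne)
    have := Finset.mem_filter.1 hp
    exact ⟨p, this.1, this.2⟩
  -- per-cell incidence bound
  have hBsub : ∀ i, ∀ l ∈ B i, IsLine l := by
    intro i l hl
    exact hlines l (Finset.mem_filter.1 (Finset.mem_filter.1 hl).1).1
  have hPerCell : ∀ i, (incCount (B i) (cells i) : ℝ) ≤
      ((B i).card : ℝ) + ((cells i).card : ℝ) * Real.sqrt ((B i).card) :=
    fun i => inc_bound _ _ (hBsub i)
  -- sum of m_i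
  have hSumM_nat : ∑ i, (B i).card =
      ∑ l ∈ Bad, (Finset.univ.filter fun i => ∃ p ∈ cells i, p ∈ l).card := by
    have : ∀ i : Fin (r ^ 2), (B i).card = ∑ l ∈ Bad, if (∃ p ∈ cells i, p ∈ l) then 1 else 0 :=
      fun i => Finset.card_filter _ _
    rw [Finset.sum_congr rfl fun i _ => this i, Finset.sum_comm]
    exact Finset.sum_congr rfl fun l _ => (Finset.card_filter _ _).symm
  have hRpow_nonneg : (0 : ℝ) ≤ R ^ ((1:ℝ) - 20 * ε) := (Real.rpow_pos_of_pos hR0 _).le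
  have hSumM : (∑ i, ((B i).card : ℝ)) ≤ n * R ^ ((1:ℝ) - 20 * ε) := by
    have h1 : (∑ i, ((B i).card : ℝ)) =
        ∑ l ∈ Bad, ((Finset.univ.filter fun i => ∃ p ∈ cells i, p ∈ l).card : ℝ) := by
      exact_mod_cast congrArg (Nat.cast : ℕ → ℝ) hSumM_nat
    rw [h1]
    calc ∑ l ∈ Bad, ((Finset.univ.filter fun i => ∃ p ∈ cells i, p ∈ l).card : ℝ)
        ≤ ∑ _l ∈ Bad, R ^ ((1:ℝ) - 20 * ε) := by
          apply Finset.sum_le_sum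
          intro l hl
          have h := (Finset.mem_filter.1 hl).2
          simp only [hgood_def] at h
          push_neg at h
          exact h.le
      _ = (Bad.card : ℝ) * R ^ ((1:ℝ) - 20 * ε) := by
          rw [Finset.sum_const, nsmul_eq_mul]
      _ ≤ n * R ^ ((1:ℝ) - 20 * ε) := by
          apply mul_le_mul_of_nonneg_right _ hRpow_nonneg
          calc (Bad.card : ℝ) ≤ (L.card : ℝ) := by
                exact_mod_cast Finset.card_le_card (Finset.filter_subset _ _)
            _ ≤ n := hL2
  -- sum of c_i^2
  have hSumC2 : (∑ i, ((cells i).card : ℝ) ^ 2) ≤ (n ^ ((1:ℝ) + ε) / R ^ 2) * n := by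
    calc ∑ i, ((cells i).card : ℝ) ^ 2
        ≤ ∑ i, (n ^ ((1:ℝ) + ε) / R ^ 2) * ((cells i).card : ℝ) := by
          apply Finset.sum_le_sum
          intro i _
          rw [pow_two]
          exact mul_le_mul_of_nonneg_right (hcell i) (Nat.cast_nonneg _)
      _ = (n ^ ((1:ℝ) + ε) / R ^ 2) * ∑ i, ((cells i).card : ℝ) := by
          rw [Finset.mul_sum]
      _ ≤ (n ^ ((1:ℝ) + ε) / R ^ 2) * n := by
          apply mul_le_mul_of_nonneg_left _ (by positivity)
          calc (∑ i, ((cells i).card : ℝ)) = (P.card : ℝ) := by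
                rw [hPcard]; push_cast; ring
            _ ≤ n := hP2
  -- rpow arithmetic
  have hε20 : (0:ℝ) ≤ 1 - 20 * ε := by linarith
  have hε20' : (0:ℝ) ≤ 1 + 20 * ε := by linarith
  have hS1 : n * R ^ ((1:ℝ) - 20 * ε) ≤ n ^ ((4:ℝ)/3 - 2 * ε) := by
    have h1 : R ^ ((1:ℝ) - 20 * ε) ≤ n ^ (((1:ℝ)/3 + ε) * (1 - 20 * ε)) := by
      rw [Real.rpow_mul hn0.le]
      exact Real.rpow_le_rpow hR0.le hr2 hε20
    calc n * R ^ ((1:ℝ) - 20 * ε) ≤ n * n ^ (((1:ℝ)/3 + ε) * (1 - 20 * ε)) :=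
          mul_le_mul_of_nonneg_left h1 hn0.le
      _ = n ^ ((1:ℝ) + ((1:ℝ)/3 + ε) * (1 - 20 * ε)) := by
          rw [Real.rpow_add hn0, Real.rpow_one]
      _ ≤ n ^ ((4:ℝ)/3 - 2 * ε) := by
          apply Real.rpow_le_rpow_of_exponent_le hn1
          nlinarith
  have hS2sq : (n ^ ((1:ℝ) + ε) / R ^ 2) * n * (n * R ^ ((1:ℝ) - 20 * ε))
      ≤ (n ^ ((4:ℝ)/3 - 2 * ε)) ^ 2 := by
    have hRsq : (R : ℝ) ^ 2 = R ^ ((2:ℝ)) := by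
      rw [← Real.rpow_natCast R 2]; norm_num
    have e1 : R ^ ((1:ℝ) - 20 * ε) / R ^ ((2:ℝ)) = R ^ (-(1 + 20 * ε)) := by
      rw [← Real.rpow_sub hR0]
      congr 1
      ring
    have e2 : n ^ ((1:ℝ) + ε) * (n * n) = n ^ ((3:ℝ) + ε) := by
      rw [show n ^ ((3:ℝ) + ε) = n ^ ((1:ℝ) + ε) * n ^ (1:ℝ) * n ^ (1:ℝ) from by
        rw [← Real.rpow_add hn0, ← Real.rpow_add hn0]; ring_nf, Real.rpow_one]
      ring
    have hkey : (n ^ ((1:ℝ) + ε) / R ^ 2) * n * (n * R ^ ((1:ℝ) - 20 * ε))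
        = n ^ ((3:ℝ) + ε) * R ^ (-(1 + 20 * ε)) := by
      calc (n ^ ((1:ℝ) + ε) / R ^ 2) * n * (n * R ^ ((1:ℝ) - 20 * ε))
          = n ^ ((1:ℝ) + ε) * (n * n) * (R ^ ((1:ℝ) - 20 * ε) / R ^ ((2:ℝ))) := by
            rw [hRsq]; ring
        _ = n ^ ((3:ℝ) + ε) * R ^ (-(1 + 20 * ε)) := by rw [e1, e2]
    have h5 : (n ^ ((1:ℝ)/3 - ε)) ^ ((1:ℝ) + 20 * ε) ≤ R ^ ((1:ℝ) + 20 * ε) :=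
      Real.rpow_le_rpow (by positivity) hr1 hε20'
    have h6 : R ^ (-(1 + 20 * ε)) ≤ n ^ (-(((1:ℝ)/3 - ε) * (1 + 20 * ε))) := by
      rw [show (-(1 + 20 * ε)) = -((1:ℝ) + 20 * ε) by ring, Real.rpow_neg hR0.le,
        Real.rpow_neg hn0.le, Real.rpow_mul hn0.le]
      exact inv_anti₀ (by positivity) h5
    calc (n ^ ((1:ℝ) + ε) / R ^ 2) * n * (n * R ^ ((1:ℝ) - 20 * ε))
        = n ^ ((3:ℝ) + ε) * R ^ (-(1 + 20 * ε)) := hkey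
      _ ≤ n ^ ((3:ℝ) + ε) * n ^ (-(((1:ℝ)/3 - ε) * (1 + 20 * ε))) :=
          mul_le_mul_of_nonneg_left h6 (by positivity)
      _ = n ^ ((3:ℝ) + ε + -(((1:ℝ)/3 - ε) * (1 + 20 * ε))) := (Real.rpow_add hn0 _ _).symm
      _ ≤ n ^ ((8:ℝ)/3 - 4 * ε) := by
          apply Real.rpow_le_rpow_of_exponent_le hn1
          nlinarith [mul_le_mul_of_nonneg_left hε30 hε.le, mul_nonneg hε.le hε.le]
      _ = (n ^ ((4:ℝ)/3 - 2 * ε)) ^ 2 := by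
          rw [sq, ← Real.rpow_add hn0]
          congr 1
          ring
  -- bound S2
  set S2 : ℝ := ∑ i, ((cells i).card : ℝ) * Real.sqrt ((B i).card) with hS2_def
  have hS2nonneg : 0 ≤ S2 := Finset.sum_nonneg fun i _ => by positivity
  have hS2 : S2 ≤ n ^ ((4:ℝ)/3 - 2 * ε) := by
    have hcs : S2 ^ 2 ≤ (∑ i, ((cells i).card : ℝ) ^ 2) *
        (∑ i, (Real.sqrt ((B i).card)) ^ 2) :=
      Finset.sum_mul_sq_le_sq_mul_sq _ _ _
    have hsq : (∑ i, (Real.sqrt ((B i).card)) ^ 2) = ∑ i, ((B i).card : ℝ) :=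
      Finset.sum_congr rfl fun i _ => Real.sq_sqrt (Nat.cast_nonneg _)
    rw [hsq] at hcs
    have hsum_nonneg : (0:ℝ) ≤ ∑ i, ((B i).card : ℝ) :=
      Finset.sum_nonneg fun i _ => Nat.cast_nonneg _
    have h2 : S2 ^ 2 ≤ (n ^ ((4:ℝ)/3 - 2 * ε)) ^ 2 := by
      calc S2 ^ 2 ≤ (∑ i, ((cells i).card : ℝ) ^ 2) * (∑ i, ((B i).card : ℝ)) := hcs
        _ ≤ ((n ^ ((1:ℝ) + ε) / R ^ 2) * n) * (n * R ^ ((1:ℝ) - 20 * ε)) := by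
            apply mul_le_mul hSumC2 hSumM hsum_nonneg (by positivity)
        _ ≤ (n ^ ((4:ℝ)/3 - 2 * ε)) ^ 2 := hS2sq
    calc S2 = Real.sqrt (S2 ^ 2) := (Real.sqrt_sq hS2nonneg).symm
      _ ≤ Real.sqrt ((n ^ ((4:ℝ)/3 - 2 * ε)) ^ 2) := Real.sqrt_le_sqrt h2
      _ = n ^ ((4:ℝ)/3 - 2 * ε) := Real.sqrt_sq (by positivity)
  -- total bad bound
  have hBadBound : (incCount Bad P : ℝ) ≤ 2 * n ^ ((4:ℝ)/3 - 2 * ε) := by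
    calc (incCount Bad P : ℝ) = ∑ i, (incCount (B i) (cells i) : ℝ) := by
          rw [hBadDecomp]
          push_cast
          exact Finset.sum_congr rfl fun i _ => by rw [hBi i]
      _ ≤ ∑ i, (((B i).card : ℝ) + ((cells i).card : ℝ) * Real.sqrt ((B i).card)) :=
          Finset.sum_le_sum fun i _ => hPerCell i
      _ = (∑ i, ((B i).card : ℝ)) + S2 := by rw [Finset.sum_add_distrib]
      _ ≤ n * R ^ ((1:ℝ) - 20 * ε) + n ^ ((4:ℝ)/3 - 2 * ε) := add_le_add hSumM hS2
      _ ≤ n ^ ((4:ℝ)/3 - 2 * ε) + n ^ ((4:ℝ)/3 - 2 * ε) := add_le_add_left hS1 _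
      _ = 2 * n ^ ((4:ℝ)/3 - 2 * ε) := by ring
  -- conclude
  have hfactor : n ^ ((4:ℝ)/3 - ε) = n ^ ((4:ℝ)/3 - 2 * ε) * n ^ ε := by
    rw [← Real.rpow_add hn0]
    congr 1
    ring
  have hsmall : 2 * n ^ ((4:ℝ)/3 - 2 * ε) ≤ (1/2) * n ^ ((4:ℝ)/3 - ε) := by
    rw [hfactor]
    have hX : (0:ℝ) < n ^ ((4:ℝ)/3 - 2 * ε) := Real.rpow_pos_of_pos hn0 _
    nlinarith
  have hgoodInc : (incCount L P : ℝ) = (incCount (L.filter good) P : ℝ) + (incCount Bad P : ℝ) := by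
    rw [hsplit]; push_cast; ring
  linarith [hInc]
end
end

section
/- Let c_a and c_b be unit circles in ℝ² whose centers are at distance d with 0 < d < 2. Let p₁ ≠ p₂ be points of c_a with p₁ ∉ c_b and p₂ ∉ c_b, and let A be one of the two open arcs of c_a with endpoints p₁ and p₂. Then |A ∩ c_b| = 1 if and only if exactly one of p₁, p₂ lies in the open unit disk bounded by c_b; otherwise |A ∩ c_b| ∈ {0, 2}. -/
set_option maxHeartbeats 1000000

open scoped Classical

noncomputable section

open Set Real Complex

/-- The Euclidean plane. -/
abbrev EPoint := EuclideanSpace ℝ (Fin 2)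



-- sign propagation across a zero-free open interval
lemma sign_prop {c u v : ℝ} (huv : u < v) (hnz : ∀ t ∈ Set.Ioo u v, Real.cos t ≠ c)
    (hu : Real.cos u ≠ c) (hv : Real.cos v ≠ c) : (c < Real.cos u ↔ c < Real.cos v) := by
  constructor
  · intro h
    by_contra h'
    push_neg at h'
    have h2 : c ∈ Set.Ioo (Real.cos v) (Real.cos u) := ⟨lt_of_le_of_ne h' hv, h⟩
    obtain ⟨t, ht, hct⟩ := intermediate_value_Ioo' (le_of_lt huv)
      Real.continuous_cos.continuousOn h2
    exact hnz t ht hct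
  · intro h
    by_contra h'
    push_neg at h'
    have h2 : c ∈ Set.Ioo (Real.cos u) (Real.cos v) := ⟨lt_of_le_of_ne h' hu, h⟩
    obtain ⟨t, ht, hct⟩ := intermediate_value_Ioo (le_of_lt huv)
      Real.continuous_cos.continuousOn h2
    exact hnz t ht hct

-- sign flip at a simple zero
lemma sign_flip {c z : ℝ} (hc1 : -1 < c) (hc2 : c < 1) (hz : Real.cos z = c) :
    ∃ ε > 0, ∀ u v : ℝ, z - ε < u → u < z → z < v → v < z + ε →
      ((c < Real.cos u) ↔ ¬ (c < Real.cos v)) := by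
  have hsin : Real.sin z ≠ 0 := by
    intro h0
    have h1 : Real.sin z ^ 2 + Real.cos z ^ 2 = 1 := Real.sin_sq_add_cos_sq z
    rw [h0, hz] at h1
    nlinarith
  rcases hsin.lt_or_gt with hneg | hpos
  · -- sin z < 0 : cos strictly increasing near z
    obtain ⟨ε, hε, hball⟩ := Metric.isOpen_iff.1 (isOpen_lt Real.continuous_sin continuous_const) z
      (by simpa using hneg)
    refine ⟨ε/2, by linarith, fun u v hu1 hu2 hv1 hv2 => ?_⟩
    have hmono : StrictMonoOn Real.cos (Set.Icc (z - ε/2) (z + ε/2)) := by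
      apply strictMonoOn_of_deriv_pos (convex_Icc _ _) Real.continuous_cos.continuousOn
      intro t ht
      rw [interior_Icc] at ht
      rw [Real.deriv_cos]
      have : t ∈ Metric.ball z ε := by
        rw [Real.ball_eq_Ioo]
        constructor <;> [linarith [ht.1]; linarith [ht.2]]
      have := hball this
      simp only [Set.mem_setOf_eq] at this
      linarith
    have h1 : Real.cos u < Real.cos z :=
      hmono ⟨by linarith, by linarith⟩ ⟨by linarith, by linarith⟩ hu2
    have h2 : Real.cos z < Real.cos v :=
      hmono ⟨by linarith, by linarith⟩ ⟨by linarith, by linarith⟩ hv1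
    rw [hz] at h1 h2
    constructor
    · intro h; linarith
    · intro h; exact absurd h2 (by simpa using h)
  · obtain ⟨ε, hε, hball⟩ := Metric.isOpen_iff.1 (isOpen_lt continuous_const Real.continuous_sin) z
      (by simpa using hpos)
    refine ⟨ε/2, by linarith, fun u v hu1 hu2 hv1 hv2 => ?_⟩
    have hmono : StrictAntiOn Real.cos (Set.Icc (z - ε/2) (z + ε/2)) := by
      apply strictAntiOn_of_deriv_neg (convex_Icc _ _) Real.continuous_cos.continuousOn
      intro t ht
      rw [interior_Icc] at ht
      rw [Real.deriv_cos]
      have : t ∈ Metric.ball z ε := by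
        rw [Real.ball_eq_Ioo]
        constructor <;> [linarith [ht.1]; linarith [ht.2]]
      have := hball this
      simp only [Set.mem_setOf_eq] at this
      linarith
    have h1 : Real.cos z < Real.cos u :=
      hmono ⟨by linarith, by linarith⟩ ⟨by linarith, by linarith⟩ hu2
    have h2 : Real.cos v < Real.cos z :=
      hmono ⟨by linarith, by linarith⟩ ⟨by linarith, by linarith⟩ hv1
    rw [hz] at h1 h2
    constructor
    · intro _ h; linarith
    · intro _; linarith



lemma window_eq {a b t t' : ℝ} (hlen : b - a < 2*π) (ht : t ∈ Set.Ioo a b)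
    (ht' : t' ∈ Set.Ioo a b) (k : ℤ) (hk : t = 2*k*π + t') : t = t' := by
  have hπ := Real.pi_pos
  have hk0 : k = 0 := by
    by_contra h
    have h1 : (1:ℝ) ≤ |(k:ℝ)| := by
      exact_mod_cast Int.one_le_abs (by omega : k ≠ 0)
    have h2 : |t - t'| < 2*π := by
      rw [abs_sub_lt_iff]
      exact ⟨by linarith [ht.1, ht.2, ht'.1, ht'.2], by linarith [ht.1, ht.2, ht'.1, ht'.2]⟩
    have h3 : t - t' = 2*(k:ℝ)*π := by rw [hk]; ring
    rw [h3, abs_mul, abs_mul] at h2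
    rw [abs_of_pos hπ, _root_.abs_of_nonneg (by norm_num : (0:ℝ) ≤ 2)] at h2
    nlinarith
  rw [hk0] at hk; push_cast at hk; linarith

lemma three_eq {a b c x y z : ℝ} (hlen : b - a < 2*π) (hx : x ∈ Set.Ioo a b)
    (hy : y ∈ Set.Ioo a b) (hz : z ∈ Set.Ioo a b) (hcx : Real.cos x = c)
    (hcy : Real.cos y = c) (hcz : Real.cos z = c) : x = y ∨ x = z ∨ y = z := by
  have hxy : Real.cos x = Real.cos y := by rw [hcx, hcy]
  have hxz : Real.cos x = Real.cos z := by rw [hcx, hcz]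
  rw [Real.cos_eq_cos_iff] at hxy hxz
  obtain ⟨k₁, hk₁ | hk₁⟩ := hxy
  · exact Or.inl (window_eq hlen hy hx k₁ hk₁).symm
  · obtain ⟨k₂, hk₂ | hk₂⟩ := hxz
    · exact Or.inr (Or.inl (window_eq hlen hz hx k₂ hk₂).symm)
    · have : y = 2*(k₁ - k₂ : ℤ)*π + z := by push_cast; rw [hk₁, hk₂]; ring
      exact Or.inr (Or.inr (window_eq hlen hy hz (k₁ - k₂) this))

lemma cross_zero' {c a' b' z : ℝ} (hc1 : -1 < c) (hc2 : c < 1) (h1 : a' < z) (h2 : z < b')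
    (hcz : Real.cos z = c)
    (hnz : ∀ t ∈ Set.Ioo a' b', Real.cos t = c → t = z)
    (ha' : Real.cos a' ≠ c) (hb' : Real.cos b' ≠ c) :
    (c < Real.cos a') ↔ ¬ (c < Real.cos b') := by
  obtain ⟨ε, hε, hflip⟩ := sign_flip hc1 hc2 hcz
  set u := (max a' (z - ε) + z) / 2 with hu_def
  set v := (z + min b' (z + ε)) / 2 with hv_def
  have hmax : max a' (z - ε) < z := max_lt h1 (by linarith)
  have hu1 : a' < u := by
    have := le_max_left a' (z - ε); simp only [hu_def]; linarith
  have hu2 : z - ε < u := by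
    have := le_max_right a' (z - ε); simp only [hu_def]; linarith
  have hu3 : u < z := by simp only [hu_def]; linarith
  have hmin : z < min b' (z + ε) := lt_min h2 (by linarith)
  have hv1 : v < b' := by
    have := min_le_left b' (z + ε); simp only [hv_def]; linarith
  have hv2 : v < z + ε := by
    have := min_le_right b' (z + ε); simp only [hv_def]; linarith
  have hv3 : z < v := by simp only [hv_def]; linarith
  have hcu : Real.cos u ≠ c := by
    intro h
    have := hnz u ⟨hu1, by linarith⟩ h
    linarith
  have hcv : Real.cos v ≠ c := by
    intro h
    have := hnz v ⟨by linarith, hv1⟩ h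
    linarith
  have e1 : (c < Real.cos a') ↔ (c < Real.cos u) := by
    apply sign_prop hu1 _ ha' hcu
    intro t ht hct
    have := hnz t ⟨ht.1, by linarith [ht.2]⟩ hct
    linarith [ht.2]
  have e2 : (c < Real.cos u) ↔ ¬ (c < Real.cos v) := hflip u v hu2 hu3 hv3 hv2
  have e3 : (c < Real.cos v) ↔ (c < Real.cos b') := by
    apply sign_prop hv1 _ hcv hb'
    intro t ht hct
    have := hnz t ⟨by linarith [ht.1], ht.2⟩ hct
    linarith [ht.1]
  rw [e1, e2, e3]

lemma core_count {c a b : ℝ} (hc1 : -1 < c) (hc2 : c < 1) (hab : a < b) (hlen : b - a < 2*π)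
    (ha : Real.cos a ≠ c) (hb : Real.cos b ≠ c) :
    ({t ∈ Set.Ioo a b | Real.cos t = c}.ncard = 1 ↔
        Xor' (c < Real.cos a) (c < Real.cos b)) ∧
    (¬ Xor' (c < Real.cos a) (c < Real.cos b) →
      {t ∈ Set.Ioo a b | Real.cos t = c}.ncard = 0 ∨
        {t ∈ Set.Ioo a b | Real.cos t = c}.ncard = 2) := by
  set S := {t ∈ Set.Ioo a b | Real.cos t = c} with hS_def
  by_cases hS : S = ∅
  · have hsign : c < Real.cos a ↔ c < Real.cos b := by
      apply sign_prop hab _ ha hb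
      intro t ht hct
      have : t ∈ S := ⟨ht, hct⟩
      rw [hS] at this; exact this
    have hnx : ¬ Xor' (c < Real.cos a) (c < Real.cos b) := by
      rw [Xor', xor_def]; tauto
    refine ⟨?_, fun _ => Or.inl (by rw [hS]; exact Set.ncard_empty ℝ)⟩
    rw [hS]
    simp only [Set.ncard_empty]
    exact iff_of_false (by norm_num) hnx
  · obtain ⟨z, hzI, hzc⟩ : ∃ z, z ∈ Set.Ioo a b ∧ Real.cos z = c := by
      obtain ⟨z, hz⟩ := Set.nonempty_iff_ne_empty.2 hS
      exact ⟨z, hz.1, hz.2⟩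
    by_cases h2 : ∃ z', (z' ∈ Set.Ioo a b ∧ Real.cos z' = c) ∧ z' ≠ z
    · obtain ⟨z', ⟨hz'I, hz'c⟩, hz'ne⟩ := h2
      have hmem : ∀ t ∈ Set.Ioo a b, Real.cos t = c → t = z ∨ t = z' := by
        intro t htI htc
        rcases three_eq hlen htI hzI hz'I htc hzc hz'c with h | h | h
        · exact Or.inl h
        · exact Or.inr h
        · exact absurd h.symm hz'ne
      have hSeq : S = {z, z'} := by
        ext t
        constructor
        · rintro ⟨htI, htc⟩
          rcases hmem t htI htc with h | h
          · exact Or.inl h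
          · exact Or.inr h
        · rintro (rfl | rfl)
          · exact ⟨hzI, hzc⟩
          · exact ⟨hz'I, hz'c⟩
      have hncard : S.ncard = 2 := by
        rw [hSeq]; exact Set.ncard_pair (Ne.symm hz'ne)
      -- claim: same signs
      have claim : ∀ w w' : ℝ, w < w' → w ∈ Set.Ioo a b → Real.cos w = c →
          w' ∈ Set.Ioo a b → Real.cos w' = c →
          (∀ t ∈ Set.Ioo a b, Real.cos t = c → t = w ∨ t = w') →
          ((c < Real.cos a) ↔ (c < Real.cos b)) := by
        intro w w' hww hwI hwc hw'I hw'c hmem'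
        set m := (w + w') / 2 with hm_def
        have hm1 : w < m := by simp only [hm_def]; linarith
        have hm2 : m < w' := by simp only [hm_def]; linarith
        have hmI : m ∈ Set.Ioo a b := ⟨by linarith [hwI.1], by linarith [hw'I.2]⟩
        have hcm : Real.cos m ≠ c := by
          intro h
          rcases hmem' m hmI h with h' | h' <;> linarith
        have e1 : (c < Real.cos a) ↔ ¬ (c < Real.cos m) := by
          apply cross_zero' hc1 hc2 hwI.1 hm1 hwc _ ha hcm
          intro t ht htc
          rcases hmem' t ⟨ht.1, by linarith [ht.2, hw'I.2]⟩ htc with h' | h'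
          · exact h'
          · exfalso; rw [h'] at ht; linarith [ht.2]
        have e2 : (c < Real.cos m) ↔ ¬ (c < Real.cos b) := by
          apply cross_zero' hc1 hc2 hm2 hw'I.2 hw'c _ hcm hb
          intro t ht htc
          rcases hmem' t ⟨by linarith [ht.1, hwI.1], ht.2⟩ htc with h' | h'
          · exfalso; rw [h'] at ht; linarith [ht.1]
          · exact h'
        tauto
      have hsame : (c < Real.cos a) ↔ (c < Real.cos b) := by
        rcases lt_or_gt_of_ne hz'ne with h | h
        · exact claim z' z h hz'I hz'c hzI hzc (fun t ht htc => (hmem t ht htc).symm)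
        · exact claim z z' h hzI hzc hz'I hz'c hmem
      have hnx : ¬ Xor' (c < Real.cos a) (c < Real.cos b) := by rw [Xor', xor_def]; tauto
      exact ⟨by rw [hncard]; exact iff_of_false (by norm_num) hnx, fun _ => Or.inr hncard⟩
    · push_neg at h2
      have hmem : ∀ t ∈ Set.Ioo a b, Real.cos t = c → t = z := by
        intro t ht htc
        exact h2 t ⟨ht, htc⟩
      have hSeq : S = {z} := by
        ext t
        constructor
        · rintro ⟨htI, htc⟩; exact hmem t htI htc
        · rintro rfl; exact ⟨hzI, hzc⟩
      have hncard : S.ncard = 1 := by rw [hSeq]; exact Set.ncard_singleton z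
      have hdiff : (c < Real.cos a) ↔ ¬ (c < Real.cos b) :=
        cross_zero' hc1 hc2 hzI.1 hzI.2 hzc hmem ha hb
      have hx : Xor' (c < Real.cos a) (c < Real.cos b) := by rw [Xor']; tauto
      exact ⟨by rw [hncard]; exact iff_of_true rfl hx, fun h => absurd hx h⟩

lemma dist_circleMap_sq (qa qb : ℂ) (hne : qb ≠ qa) (t : ℝ) :
    dist (circleMap qa 1 t) qb ^ 2
      = 1 + dist qa qb ^ 2 - 2 * dist qa qb * Real.cos (t - (qb - qa).arg) := by
  have hw : qb - qa ≠ 0 := sub_ne_zero.2 hne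
  have hd : ‖qb - qa‖ = dist qa qb := by
    rw [dist_comm, Complex.dist_eq]
  have habs : ‖qb - qa‖ ≠ 0 := by
    exact norm_ne_zero_iff.mpr hw
  have hre : (qb - qa).re = dist qa qb * Real.cos ((qb - qa).arg) := by
    rw [Complex.cos_arg hw, hd.symm]
    field_simp
  have him : (qb - qa).im = dist qa qb * Real.sin ((qb - qa).arg) := by
    rw [Complex.sin_arg, hd.symm]
    field_simp
  have hsub : circleMap qa 1 t - qb = Complex.exp (t * Complex.I) - (qb - qa) := by
    simp [circleMap]; ring
  rw [Complex.dist_eq, Complex.sq_norm, hsub, Complex.normSq_sub]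
  have h1 : Complex.normSq (Complex.exp (t * Complex.I)) = 1 := by
    rw [Complex.normSq_eq_norm_sq, Complex.norm_exp]
    simp
  have h2 : Complex.normSq (qb - qa) = dist qa qb ^ 2 := by
    rw [Complex.normSq_eq_norm_sq, hd]
  have h3 : (Complex.exp (t * Complex.I) * (starRingEnd ℂ) (qb - qa)).re
      = Real.cos t * (qb - qa).re + Real.sin t * (qb - qa).im := by
    rw [Complex.mul_re, Complex.conj_re, Complex.conj_im,
      Complex.exp_ofReal_mul_I_re, Complex.exp_ofReal_mul_I_im]
    ring
  rw [h1, h2, h3, hre, him, Real.cos_sub]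
  ring

lemma circleMap_eq_iff (qa : ℂ) (t t' : ℝ) :
    circleMap qa 1 t = circleMap qa 1 t' ↔ ∃ n : ℤ, t = t' + n * (2*π) := by
  rw [circleMap, circleMap, Complex.ofReal_one, one_mul, one_mul, add_right_inj,
    Complex.exp_eq_exp_iff_exists_int]
  constructor
  · rintro ⟨n, hn⟩
    refine ⟨n, ?_⟩
    have : ((t : ℂ) - (t' + n * (2*π))) * Complex.I = 0 := by
      push_cast
      rw [sub_mul]
      rw [hn]
      ring
    rcases mul_eq_zero.1 this with h | h
    · have := sub_eq_zero.1 h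
      exact_mod_cast this
    · exact absurd h Complex.I_ne_zero
  · rintro ⟨n, hn⟩
    refine ⟨n, ?_⟩
    rw [hn]
    push_cast
    ring

lemma mem_sphere_circleMap_iff {qa qb : ℂ} (hd0 : 0 < dist qa qb) (t : ℝ) :
    circleMap qa 1 t ∈ Metric.sphere qb 1 ↔
      Real.cos (t - (qb - qa).arg) = dist qa qb / 2 := by
  have hne : qb ≠ qa := by
    intro h; rw [h] at hd0; simp at hd0
  have h := dist_circleMap_sq qa qb hne t
  rw [Metric.mem_sphere]
  have hnn : 0 ≤ dist (circleMap qa 1 t) qb := dist_nonneg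
  constructor
  · intro h1
    rw [h1] at h
    have : dist qa qb * (dist qa qb - 2 * Real.cos (t - (qb - qa).arg)) = 0 := by nlinarith
    rcases mul_eq_zero.1 this with h' | h'
    · linarith
    · linarith
  · intro h1
    have : dist (circleMap qa 1 t) qb ^ 2 = 1 := by rw [h, h1]; ring
    nlinarith

lemma mem_ball_circleMap_iff {qa qb : ℂ} (hd0 : 0 < dist qa qb) (t : ℝ) :
    circleMap qa 1 t ∈ Metric.ball qb 1 ↔
      dist qa qb / 2 < Real.cos (t - (qb - qa).arg) := by
  have hne : qb ≠ qa := by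
    intro h; rw [h] at hd0; simp at hd0
  have h := dist_circleMap_sq qa qb hne t
  rw [Metric.mem_ball]
  have hnn : 0 ≤ dist (circleMap qa 1 t) qb := dist_nonneg
  constructor
  · intro h1
    nlinarith
  · intro h1
    nlinarith

lemma circleMap_window_inj {qa : ℂ} {t t' : ℝ} (h : |t - t'| < 2*π)
    (he : circleMap qa 1 t = circleMap qa 1 t') : t = t' := by
  have hπ := Real.pi_pos
  obtain ⟨n, hn⟩ := (circleMap_eq_iff qa t t').1 he
  have hn0 : n = 0 := by
    by_contra h0
    have h1 : (1:ℝ) ≤ |(n:ℝ)| := by exact_mod_cast Int.one_le_abs (by omega : n ≠ 0)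
    have : t - t' = n * (2*π) := by rw [hn]; ring
    rw [this, abs_mul, abs_of_pos (by linarith : (0:ℝ) < 2*π)] at h
    nlinarith
  rw [hn0] at hn; push_cast at hn; linarith

lemma main_arc (qa qb : ℂ) (hd0 : 0 < dist qa qb) (hd2 : dist qa qb < 2)
    (a b : ℝ) (hab : a < b) (hlen : b - a < 2*π)
    (hpa : circleMap qa 1 a ∉ Metric.sphere qb 1)
    (hpb : circleMap qa 1 b ∉ Metric.sphere qb 1) :
    ((circleMap qa 1 '' Set.Ioo a b ∩ Metric.sphere qb 1).ncard = 1 ↔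
        Xor' (circleMap qa 1 a ∈ Metric.ball qb 1) (circleMap qa 1 b ∈ Metric.ball qb 1)) ∧
    (¬ Xor' (circleMap qa 1 a ∈ Metric.ball qb 1) (circleMap qa 1 b ∈ Metric.ball qb 1) →
      (circleMap qa 1 '' Set.Ioo a b ∩ Metric.sphere qb 1).ncard = 0 ∨
        (circleMap qa 1 '' Set.Ioo a b ∩ Metric.sphere qb 1).ncard = 2) := by
  set φ := (qb - qa).arg with hφ
  set c := dist qa qb / 2 with hc
  have hc1 : -1 < c := by rw [hc]; linarith
  have hc2 : c < 1 := by rw [hc]; linarith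
  -- rewrite the intersection as an image
  have him : circleMap qa 1 '' Set.Ioo a b ∩ Metric.sphere qb 1
      = circleMap qa 1 '' {t ∈ Set.Ioo a b | Real.cos (t - φ) = c} := by
    rw [← Set.image_inter_preimage]
    have : Set.Ioo a b ∩ circleMap qa 1 ⁻¹' Metric.sphere qb 1
        = {t ∈ Set.Ioo a b | Real.cos (t - φ) = c} := by
      ext t
      constructor
      · rintro ⟨h1, h2⟩
        exact ⟨h1, (mem_sphere_circleMap_iff hd0 t).1 h2⟩
      · rintro ⟨h1, h2⟩
        exact ⟨h1, (mem_sphere_circleMap_iff hd0 t).2 h2⟩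
    rw [this]
  have hinj : Set.InjOn (circleMap qa 1) {t ∈ Set.Ioo a b | Real.cos (t - φ) = c} := by
    intro t ht t' ht' he
    apply circleMap_window_inj _ he
    rw [abs_sub_lt_iff]
    constructor
    · linarith [ht.1.1, ht.1.2, ht'.1.1, ht'.1.2]
    · linarith [ht.1.1, ht.1.2, ht'.1.1, ht'.1.2]
  have hncard : (circleMap qa 1 '' Set.Ioo a b ∩ Metric.sphere qb 1).ncard
      = {t ∈ Set.Ioo a b | Real.cos (t - φ) = c}.ncard := by
    rw [him, Set.ncard_image_of_injOn hinj]
  -- shift by φ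
  have hshift : {t ∈ Set.Ioo a b | Real.cos (t - φ) = c}
      = (fun u => u + φ) '' {u ∈ Set.Ioo (a - φ) (b - φ) | Real.cos u = c} := by
    ext t
    simp only [Set.mem_setOf_eq, Set.mem_image, Set.mem_Ioo]
    constructor
    · rintro ⟨⟨h1, h2⟩, h3⟩
      exact ⟨t - φ, ⟨⟨by linarith, by linarith⟩, h3⟩, by ring⟩
    · rintro ⟨u, ⟨⟨h1, h2⟩, h3⟩, rfl⟩
      exact ⟨⟨by linarith, by linarith⟩, by simpa using h3⟩
  have hncard2 : {t ∈ Set.Ioo a b | Real.cos (t - φ) = c}.ncard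
      = {u ∈ Set.Ioo (a - φ) (b - φ) | Real.cos u = c}.ncard := by
    rw [hshift]
    exact Set.ncard_image_of_injective _ (add_left_injective φ)
  have hca : Real.cos (a - φ) ≠ c := by
    intro h
    exact hpa ((mem_sphere_circleMap_iff hd0 a).2 h)
  have hcb : Real.cos (b - φ) ≠ c := by
    intro h
    exact hpb ((mem_sphere_circleMap_iff hd0 b).2 h)
  have hba : circleMap qa 1 a ∈ Metric.ball qb 1 ↔ c < Real.cos (a - φ) :=
    mem_ball_circleMap_iff hd0 a
  have hbb : circleMap qa 1 b ∈ Metric.ball qb 1 ↔ c < Real.cos (b - φ) :=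
    mem_ball_circleMap_iff hd0 b
  have hcore := core_count hc1 hc2 (by linarith : a - φ < b - φ)
    (by linarith : (b - φ) - (a - φ) < 2*π) hca hcb
  have hxx : Xor' (circleMap qa 1 a ∈ Metric.ball qb 1) (circleMap qa 1 b ∈ Metric.ball qb 1)
      ↔ Xor' (c < Real.cos (a - φ)) (c < Real.cos (b - φ)) := by
    simp only [Xor', hba, hbb]
  rw [hncard, hncard2, hxx]
  exact hcore

lemma component_eq_of_partition {X : Type*} [TopologicalSpace X] {S U V O O' : Set X}
    (hS : S = U ∪ V) (hU : U = S ∩ O) (hV : V = S ∩ O') (hO : IsOpen O) (hO' : IsOpen O')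
    (hdisj : S ∩ O ∩ O' = ∅) (hUc : IsPreconnected U) {y : X} (hy : y ∈ U) :
    connectedComponentIn S y = U := by
  apply subset_antisymm
  · intro w hw
    by_contra hwU
    have hwS : w ∈ S := connectedComponentIn_subset S y hw
    have hwV : w ∈ V := by
      rw [hS] at hwS
      rcases hwS with h | h
      · exact absurd h hwU
      · exact h
    have hpc : IsPreconnected (connectedComponentIn S y) := isPreconnected_connectedComponentIn
    have hsub : connectedComponentIn S y ⊆ O ∪ O' := by
      intro z hz
      have hzS : z ∈ S := connectedComponentIn_subset S y hz
      rw [hS] at hzS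
      rcases hzS with h | h
      · exact Or.inl (hU ▸ h).2
      · exact Or.inr (hV ▸ h).2
    have hne1 : (connectedComponentIn S y ∩ O).Nonempty :=
      ⟨y, mem_connectedComponentIn (hS ▸ Or.inl hy), (hU ▸ hy).2⟩
    have hne2 : (connectedComponentIn S y ∩ O').Nonempty := ⟨w, hw, (hV ▸ hwV).2⟩
    obtain ⟨z, hz1, hz2⟩ := hpc O O' hO hO' hsub hne1 hne2
    have hzS : z ∈ S := connectedComponentIn_subset S y hz1
    have : z ∈ S ∩ O ∩ O' := ⟨⟨hzS, hz2.1⟩, hz2.2⟩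
    rw [hdisj] at this
    exact this
  · exact hUc.subset_connectedComponentIn hy (by rw [hS]; exact Set.subset_union_left)

theorem arc_complex (qa qb : ℂ) (hd0 : 0 < dist qa qb) (hd2 : dist qa qb < 2)
    (p₁ p₂ : ℂ) (hp₁ : p₁ ∈ Metric.sphere qa 1) (hp₂ : p₂ ∈ Metric.sphere qa 1)
    (hne : p₁ ≠ p₂) (hp₁b : p₁ ∉ Metric.sphere qb 1) (hp₂b : p₂ ∉ Metric.sphere qb 1)
    (x : ℂ) (hx : x ∈ Metric.sphere qa 1 \ {p₁, p₂})
    (A : Set ℂ) (hA : A = connectedComponentIn (Metric.sphere qa 1 \ {p₁, p₂}) x) :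
    ((A ∩ Metric.sphere qb 1).ncard = 1 ↔
      Xor' (p₁ ∈ Metric.ball qb 1) (p₂ ∈ Metric.ball qb 1)) ∧
    (¬ Xor' (p₁ ∈ Metric.ball qb 1) (p₂ ∈ Metric.ball qb 1) →
      (A ∩ Metric.sphere qb 1).ncard = 0 ∨ (A ∩ Metric.sphere qb 1).ncard = 2) := by
  have hπ := Real.pi_pos
  have h2π : (0:ℝ) < 2*π := by linarith
  have hrange : Set.range (circleMap qa 1) = Metric.sphere qa 1 := by
    rw [range_circleMap]; norm_num
  -- representative angles
  obtain ⟨s₁, hs₁⟩ : ∃ s, circleMap qa 1 s = p₁ := by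
    rw [← hrange] at hp₁; exact hp₁
  have hmod : ∀ p : ℂ, p ∈ Metric.sphere qa 1 →
      ∃ s ∈ Set.Ioc s₁ (s₁ + 2*π), circleMap qa 1 s = p := by
    intro p hp
    rw [← hrange] at hp
    obtain ⟨s, hs⟩ := hp
    refine ⟨toIocMod h2π s₁ s, toIocMod_mem_Ioc h2π s₁ s, ?_⟩
    rw [← hs]
    apply (circleMap_eq_iff qa _ _).2
    refine ⟨-(toIocDiv h2π s₁ s), ?_⟩
    rw [toIocMod, zsmul_eq_mul]
    push_cast
    ring
  obtain ⟨s₂, hs₂mem, hs₂⟩ := hmod p₂ hp₂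
  have hper : circleMap qa 1 (s₁ + 2*π) = p₁ := by
    rw [← hs₁]
    exact (circleMap_eq_iff qa _ _).2 ⟨1, by push_cast; ring⟩
  have hs₂ne : s₂ ≠ s₁ + 2*π := by
    intro h
    rw [h, hper] at hs₂
    exact hne hs₂
  have h12 : s₁ < s₂ := hs₂mem.1
  have h2t : s₂ < s₁ + 2*π := lt_of_le_of_ne hs₂mem.2 hs₂ne
  set U := circleMap qa 1 '' Set.Ioo s₁ s₂ with hU_def
  set V := circleMap qa 1 '' Set.Ioo s₂ (s₁ + 2*π) with hV_def
  set U' := circleMap qa 1 '' Set.Icc s₁ s₂ with hU'_def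
  set V' := circleMap qa 1 '' Set.Icc s₂ (s₁ + 2*π) with hV'_def
  set S := Metric.sphere qa 1 \ {p₁, p₂} with hS_def
  -- U, V inside S
  have hUS : U ⊆ S := by
    rintro y ⟨t, ht, rfl⟩
    refine ⟨by rw [← hrange]; exact ⟨t, rfl⟩, ?_⟩
    intro hmem
    rcases hmem with h | h
    · rw [← hs₁] at h
      have := circleMap_window_inj (by rw [abs_sub_lt_iff]; constructor <;>
        [linarith [ht.1, ht.2]; linarith [ht.1, ht.2]]) h
      linarith [ht.1]
    · simp only [Set.mem_singleton_iff] at h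
      rw [← hs₂] at h
      have := circleMap_window_inj (by rw [abs_sub_lt_iff]; constructor <;>
        [linarith [ht.1, ht.2]; linarith [ht.1, ht.2]]) h
      linarith [ht.2]
  have hVS : V ⊆ S := by
    rintro y ⟨t, ht, rfl⟩
    refine ⟨by rw [← hrange]; exact ⟨t, rfl⟩, ?_⟩
    intro hmem
    rcases hmem with h | h
    · rw [← hper] at h
      have := circleMap_window_inj (by rw [abs_sub_lt_iff]; constructor <;>
        [linarith [ht.1, ht.2]; linarith [ht.1, ht.2]]) h
      linarith [ht.2]
    · simp only [Set.mem_singleton_iff] at h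
      rw [← hs₂] at h
      have := circleMap_window_inj (by rw [abs_sub_lt_iff]; constructor <;>
        [linarith [ht.1, ht.2]; linarith [ht.1, ht.2]]) h
      linarith [ht.1]
  have hSU : S = U ∪ V := by
    apply subset_antisymm
    · rintro y ⟨hysph, hymem⟩
      obtain ⟨t, htmem, ht⟩ := hmod y hysph
      have ht1 : t ≠ s₂ := by
        intro h; rw [h, hs₂] at ht; exact hymem (Or.inr (by simp [← ht]))
      have ht2 : t ≠ s₁ + 2*π := by
        intro h; rw [h, hper] at ht; exact hymem (Or.inl ht.symm)
      rcases lt_or_gt_of_ne ht1 with h | h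
      · exact Or.inl ⟨t, ⟨htmem.1, h⟩, ht⟩
      · exact Or.inr ⟨t, ⟨h, lt_of_le_of_ne htmem.2 ht2⟩, ht⟩
    · exact Set.union_subset hUS hVS
  -- disjointness from closed arcs
  have hUV' : U ∩ V' = ∅ := by
    rw [Set.eq_empty_iff_forall_notMem]
    rintro y ⟨⟨t, ht, rfl⟩, ⟨t', ht', heq⟩⟩
    have := circleMap_window_inj (t := t') (t' := t) (by rw [abs_sub_lt_iff]; constructor <;>
      [linarith [ht.1, ht.2, ht'.1, ht'.2]; linarith [ht.1, ht.2, ht'.1, ht'.2]]) heq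
    rw [this] at ht'
    linarith [ht.2, ht'.1]
  have hVU' : V ∩ U' = ∅ := by
    rw [Set.eq_empty_iff_forall_notMem]
    rintro y ⟨⟨t, ht, rfl⟩, ⟨t', ht', heq⟩⟩
    have := circleMap_window_inj (t := t') (t' := t) (by rw [abs_sub_lt_iff]; constructor <;>
      [linarith [ht.1, ht.2, ht'.1, ht'.2]; linarith [ht.1, ht.2, ht'.1, ht'.2]]) heq
    rw [this] at ht'
    linarith [ht.1, ht'.2]
  have hV'closed : IsClosed V' := (isCompact_Icc.image (continuous_circleMap qa 1)).isClosed
  have hU'closed : IsClosed U' := (isCompact_Icc.image (continuous_circleMap qa 1)).isClosed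
  have hUeq : U = S ∩ V'ᶜ := by
    apply subset_antisymm
    · intro y hy
      refine ⟨hUS hy, fun hyV' => ?_⟩
      have : y ∈ U ∩ V' := ⟨hy, hyV'⟩
      rw [hUV'] at this; exact this
    · intro y hy
      obtain ⟨hyS, hyO⟩ := hy
      rw [hSU] at hyS
      rcases hyS with h | h
      · exact h
      · exact absurd (Set.image_mono Set.Ioo_subset_Icc_self h) hyO
  have hVeq : V = S ∩ U'ᶜ := by
    apply subset_antisymm
    · intro y hy
      refine ⟨hVS hy, fun hyU' => ?_⟩
      have : y ∈ V ∩ U' := ⟨hy, hyU'⟩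
      rw [hVU'] at this; exact this
    · intro y hy
      obtain ⟨hyS, hyO⟩ := hy
      rw [hSU] at hyS
      rcases hyS with h | h
      · exact absurd (Set.image_mono Set.Ioo_subset_Icc_self h) hyO
      · exact h
  have hdisj : S ∩ V'ᶜ ∩ U'ᶜ = ∅ := by
    rw [Set.eq_empty_iff_forall_notMem]
    rintro y ⟨⟨hyS, hyV'⟩, hyU'⟩
    rw [hSU] at hyS
    rcases hyS with h | h
    · exact hyU' (Set.image_mono Set.Ioo_subset_Icc_self h)
    · exact hyV' (Set.image_mono Set.Ioo_subset_Icc_self h)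
  have hUc : IsPreconnected U :=
    isPreconnected_Ioo.image _ (continuous_circleMap qa 1).continuousOn
  have hVc : IsPreconnected V :=
    isPreconnected_Ioo.image _ (continuous_circleMap qa 1).continuousOn
  -- identify A
  have hxUV : x ∈ U ∪ V := by rw [← hSU]; exact hx
  have harc1 := main_arc qa qb hd0 hd2 s₁ s₂ h12 (by linarith)
    (by rw [hs₁]; exact hp₁b) (by rw [hs₂]; exact hp₂b)
  have harc2 := main_arc qa qb hd0 hd2 s₂ (s₁ + 2*π) h2t (by linarith)
    (by rw [hs₂]; exact hp₂b) (by rw [hper]; exact hp₁b)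
  rcases hxUV with hxU | hxV
  · have hAeq : A = U := by
      rw [hA]
      exact component_eq_of_partition hSU hUeq hVeq hV'closed.isOpen_compl
        hU'closed.isOpen_compl hdisj hUc hxU
    rw [hAeq, hU_def]
    rw [hs₁, hs₂] at harc1
    exact harc1
  · have hAeq : A = V := by
      rw [hA]
      exact component_eq_of_partition (by rw [hSU, Set.union_comm]) hVeq hUeq
        hU'closed.isOpen_compl hV'closed.isOpen_compl
        (by rw [← hdisj]; ext y; constructor <;> (rintro ⟨⟨h1, h2⟩, h3⟩; exact ⟨⟨h1, h3⟩, h2⟩))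
        hVc hxV
    rw [hAeq, hV_def]
    rw [hs₂, hper] at harc2
    rw [Xor', _root_.xor_comm] at harc2
    exact harc2

lemma homeo_image_ccIn {X Y : Type*} [TopologicalSpace X] [TopologicalSpace Y]
    (e : X ≃ₜ Y) {S : Set X} {x : X} (hx : x ∈ S) :
    e '' connectedComponentIn S x = connectedComponentIn (e '' S) (e x) := by
  apply subset_antisymm
  · exact e.continuous.image_connectedComponentIn_subset hx
  · intro y hy
    have hmem : e x ∈ e '' S := Set.mem_image_of_mem _ hx
    have h := e.symm.continuous.image_connectedComponentIn_subset hmem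
    have h2 : e.symm '' (e '' S) = S := by
      rw [← Set.image_comp]
      simp
    have h3 : e.symm (e x) = x := e.symm_apply_apply x
    rw [h2, h3] at h
    have h4 : e.symm y ∈ connectedComponentIn S x := h (Set.mem_image_of_mem _ hy)
    have h5 := Set.mem_image_of_mem e h4
    rwa [e.apply_symm_apply] at h5


/-- let `c_a`, `c_b` be unit circles whose centers are at distance
`0 < d < 2`, and let `p₁ ≠ p₂` be points of `c_a` not lying on `c_b`.  An open arc `A` of
`c_a` with endpoints `p₁, p₂` meets `c_b` in exactly one point iff exactly one of
`p₁, p₂` lies in the open unit disk bounded by `c_b`; otherwise `|A ∩ c_b| ∈ {0, 2}`. -/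
theorem arc_crossing_dichotomy (qa qb : EPoint)
    (hd0 : 0 < dist qa qb) (hd2 : dist qa qb < 2)
    (p₁ p₂ : EPoint) (hp₁ : p₁ ∈ Metric.sphere qa 1) (hp₂ : p₂ ∈ Metric.sphere qa 1)
    (hne : p₁ ≠ p₂) (hp₁b : p₁ ∉ Metric.sphere qb 1) (hp₂b : p₂ ∉ Metric.sphere qb 1)
    (x : EPoint) (hx : x ∈ Metric.sphere qa 1 \ {p₁, p₂})
    (A : Set EPoint) (hA : A = connectedComponentIn (Metric.sphere qa 1 \ {p₁, p₂}) x) :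
    ((A ∩ Metric.sphere qb 1).ncard = 1 ↔
      Xor' (p₁ ∈ Metric.ball qb 1) (p₂ ∈ Metric.ball qb 1)) ∧
    (¬ Xor' (p₁ ∈ Metric.ball qb 1) (p₂ ∈ Metric.ball qb 1) →
      (A ∩ Metric.sphere qb 1).ncard = 0 ∨ (A ∩ Metric.sphere qb 1).ncard = 2) := by
  set e := Complex.orthonormalBasisOneI.repr.symm with he_def
  have hdist : ∀ x y : EPoint, dist (e x) (e y) = dist x y := fun x y => e.dist_map x y
  have hsph : ∀ (z q : EPoint) (r : ℝ), z ∈ Metric.sphere q r ↔ e z ∈ Metric.sphere (e q) r := by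
    intro z q r
    rw [Metric.mem_sphere, Metric.mem_sphere, hdist]
  have hball : ∀ (z q : EPoint) (r : ℝ), z ∈ Metric.ball q r ↔ e z ∈ Metric.ball (e q) r := by
    intro z q r
    rw [Metric.mem_ball, Metric.mem_ball, hdist]
  have hsph_img : ∀ (q : EPoint) (r : ℝ), e '' Metric.sphere q r = Metric.sphere (e q) r := by
    intro q r
    ext z
    constructor
    · rintro ⟨w, hw, rfl⟩
      exact (hsph w q r).1 hw
    · intro hz
      refine ⟨e.symm z, ?_, e.apply_symm_apply z⟩
      rw [hsph (e.symm z) q r, e.apply_symm_apply]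
      exact hz
  have himS : e '' (Metric.sphere qa 1 \ {p₁, p₂})
      = Metric.sphere (e qa) 1 \ {e p₁, e p₂} := by
    rw [Set.image_diff e.injective, hsph_img, Set.image_pair]
  have hxe : e x ∈ Metric.sphere (e qa) 1 \ {e p₁, e p₂} := by
    rw [← himS]
    exact Set.mem_image_of_mem _ hx
  have hAe : e '' A = connectedComponentIn (Metric.sphere (e qa) 1 \ {e p₁, e p₂}) (e x) := by
    rw [hA, ← himS]
    exact homeo_image_ccIn e.toHomeomorph hx
  have key := arc_complex (e qa) (e qb) (by rw [hdist]; exact hd0) (by rw [hdist]; exact hd2)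
    (e p₁) (e p₂) ((hsph p₁ qa 1).1 hp₁) ((hsph p₂ qa 1).1 hp₂)
    (fun h => hne (e.injective h))
    (fun h => hp₁b ((hsph p₁ qb 1).2 h)) (fun h => hp₂b ((hsph p₂ qb 1).2 h))
    (e x) hxe (e '' A) hAe
  have hn : (A ∩ Metric.sphere qb 1).ncard = (e '' A ∩ Metric.sphere (e qb) 1).ncard := by
    rw [← hsph_img qb 1, ← Set.image_inter e.injective,
      Set.ncard_image_of_injective _ e.injective]
  have hxor : Xor' (e p₁ ∈ Metric.ball (e qb) 1) (e p₂ ∈ Metric.ball (e qb) 1)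
      ↔ Xor' (p₁ ∈ Metric.ball qb 1) (p₂ ∈ Metric.ball qb 1) := by
    simp only [Xor', hball]
  rw [hn, ← hxor]
  exact key
end
end
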